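/- Let G be an additive abelian group and S a zero-sum free subset of G with |S| = 3. Then |Σ(S)| ≥ 5; furthermore, if no element of S has order 2, then |Σ(S)| ≥ 6. -/

import Mathlib

set_option maxHeartbeats 1000000

open Finset

def sigmaSet {G : Type*} [AddCommGroup G] [DecidableEq G] (S : Finset G) : Finset G :=
  (S.powerset.filter (· ≠ ∅)).image (fun T => T.sum id)

def ZeroSumFree {G : Type*} [AddCommGroup G] (S : Finset G) : Prop :=
  ∀ T ⊆ S, T ≠ ∅ → T.sum id ≠ 0

lemma mem_sigma' {G : Type*} [AddCommGroup G] [DecidableEq G] {S T : Finset G}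
    (hT : T ⊆ S) (hne : T ≠ ∅) : T.sum id ∈ sigmaSet S :=
  mem_image.mpr ⟨T, mem_filter.mpr ⟨mem_powerset.mpr hT, hne⟩, rfl⟩

section Aux
variable {G : Type*} [AddCommGroup G] [DecidableEq G]

lemma sum_three {a b c : G} (hab : a ≠ b) (hac : a ≠ c) (hbc : b ≠ c) :
    ({a,b,c} : Finset G).sum id = a + b + c := by
  rw [Finset.sum_insert (by simp [hab, hac]), Finset.sum_pair hbc]
  simp [add_assoc]

lemma aux_sub {a b c : G} (hab : a ≠ b) (hac : a ≠ c) (hbc : b ≠ c) :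
    ∀ x ∈ ({a, b, c, a+b, a+c, b+c, a+b+c} : Finset G), x ∈ sigmaSet ({a,b,c} : Finset G) := by
  have h1 : a ∈ sigmaSet ({a,b,c} : Finset G) := by
    have := mem_sigma' (S := ({a,b,c} : Finset G)) (T := {a}) (by simp) (by simp)
    simpa using this
  have h2 : b ∈ sigmaSet ({a,b,c} : Finset G) := by
    have := mem_sigma' (S := ({a,b,c} : Finset G)) (T := {b}) (by simp) (by simp)
    simpa using this
  have h3 : c ∈ sigmaSet ({a,b,c} : Finset G) := by
    have := mem_sigma' (S := ({a,b,c} : Finset G)) (T := {c}) (by simp) (by simp)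
    simpa using this
  have h4 : a + b ∈ sigmaSet ({a,b,c} : Finset G) := by
    have := mem_sigma' (S := ({a,b,c} : Finset G)) (T := {a,b})
      (by intro x hx; simp at hx ⊢; tauto) (by simp)
    simpa [Finset.sum_pair hab] using this
  have h5 : a + c ∈ sigmaSet ({a,b,c} : Finset G) := by
    have := mem_sigma' (S := ({a,b,c} : Finset G)) (T := {a,c})
      (by intro x hx; simp at hx ⊢; tauto) (by simp)
    simpa [Finset.sum_pair hac] using this
  have h6 : b + c ∈ sigmaSet ({a,b,c} : Finset G) := by
    have := mem_sigma' (S := ({a,b,c} : Finset G)) (T := {b,c})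
      (by intro x hx; simp at hx ⊢; tauto) (by simp)
    simpa [Finset.sum_pair hbc] using this
  have h7 : a + b + c ∈ sigmaSet ({a,b,c} : Finset G) := by
    have := mem_sigma' (S := ({a,b,c} : Finset G)) (T := {a,b,c}) (le_refl _) (by simp)
    rwa [sum_three hab hac hbc] at this
  intro x hx
  simp only [mem_insert, mem_singleton] at hx
  rcases hx with rfl | rfl | rfl | rfl | rfl | rfl | rfl <;> assumption

lemma zsf_facts {a b c : G} (hab : a ≠ b) (hac : a ≠ c) (hbc : b ≠ c)
    (hS : ZeroSumFree ({a,b,c} : Finset G)) :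
    a ≠ 0 ∧ b ≠ 0 ∧ c ≠ 0 ∧ a+b ≠ 0 ∧ a+c ≠ 0 ∧ b+c ≠ 0 ∧ a+b+c ≠ 0 := by
  refine ⟨?_, ?_, ?_, ?_, ?_, ?_, ?_⟩
  · simpa using hS {a} (by simp) (by simp)
  · simpa using hS {b} (by simp) (by simp)
  · simpa using hS {c} (by simp) (by simp)
  · simpa [Finset.sum_pair hab] using hS {a,b} (by intro x hx; simp at hx ⊢; tauto) (by simp)
  · simpa [Finset.sum_pair hac] using hS {a,c} (by intro x hx; simp at hx ⊢; tauto) (by simp)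
  · simpa [Finset.sum_pair hbc] using hS {b,c} (by intro x hx; simp at hx ⊢; tauto) (by simp)
  · have := hS {a,b,c} (le_refl _) (by simp)
    rwa [sum_three hab hac hbc] at this

lemma aux5 {a b c : G} (hab : a ≠ b) (hac : a ≠ c) (hbc : b ≠ c)
    (hS : ZeroSumFree ({a,b,c} : Finset G)) (h1 : a + b ≠ c) :
    5 ≤ (sigmaSet ({a,b,c} : Finset G)).card := by
  obtain ⟨ha0, hb0, hc0, hab0, hac0, hbc0, habc0⟩ := zsf_facts hab hac hbc hS
  have hsub : ({a, b, c, a + b, a+b+c} : Finset G) ⊆ sigmaSet ({a,b,c} : Finset G) := by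
    intro x hx
    apply aux_sub hab hac hbc
    simp only [mem_insert, mem_singleton] at hx ⊢
    tauto
  refine le_trans ?_ (card_le_card hsub)
  have e1 : a ≠ a + b := fun h => hb0 (left_eq_add.mp h)
  have e2 : b ≠ a + b := fun h => ha0 (right_eq_add.mp h)
  have e3 : a ≠ a + b + c := by
    rw [add_assoc]; exact fun h => hbc0 (left_eq_add.mp h)
  have e4 : b ≠ a + b + c := by
    rw [show a + b + c = b + (a + c) by abel]; exact fun h => hac0 (left_eq_add.mp h)
  have e5 : c ≠ a + b + c := by
    rw [show a + b + c = c + (a + b) by abel]; exact fun h => hab0 (left_eq_add.mp h)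
  have e6 : a + b ≠ a + b + c := fun h => hc0 (left_eq_add.mp h)
  have hc' : c ≠ a + b := Ne.symm h1
  rw [show (5 : ℕ) = ({a, b, c, a + b, a+b+c} : Finset G).card from ?_]
  · rw [card_insert_of_notMem (by simp [hab, hac, e1, e3]),
        card_insert_of_notMem (by simp [hbc, e2, e4]),
        card_insert_of_notMem (by simp [hc', e5]),
        card_insert_of_notMem (by simp [e6]), card_singleton]

lemma aux6 {a b c : G} (hab : a ≠ b) (hac : a ≠ c) (hbc : b ≠ c)
    (hS : ZeroSumFree ({a,b,c} : Finset G)) (h1 : a + b ≠ c) (h2 : a + c ≠ b) :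
    6 ≤ (sigmaSet ({a,b,c} : Finset G)).card := by
  obtain ⟨ha0, hb0, hc0, hab0, hac0, hbc0, habc0⟩ := zsf_facts hab hac hbc hS
  have hsub : ({a, b, c, a + b, a + c, a+b+c} : Finset G) ⊆ sigmaSet ({a,b,c} : Finset G) := by
    intro x hx
    apply aux_sub hab hac hbc
    simp only [mem_insert, mem_singleton] at hx ⊢
    tauto
  refine le_trans ?_ (card_le_card hsub)
  have e1 : a ≠ a + b := fun h => hb0 (left_eq_add.mp h)
  have e1' : a ≠ a + c := fun h => hc0 (left_eq_add.mp h)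
  have e2 : b ≠ a + b := fun h => ha0 (right_eq_add.mp h)
  have e2' : c ≠ a + c := fun h => ha0 (right_eq_add.mp h)
  have e3 : a ≠ a + b + c := by
    rw [add_assoc]; exact fun h => hbc0 (left_eq_add.mp h)
  have e4 : b ≠ a + b + c := by
    rw [show a + b + c = b + (a + c) by abel]; exact fun h => hac0 (left_eq_add.mp h)
  have e5 : c ≠ a + b + c := by
    rw [show a + b + c = c + (a + b) by abel]; exact fun h => hab0 (left_eq_add.mp h)
  have e6 : a + b ≠ a + b + c := fun h => hc0 (left_eq_add.mp h)
  have e6' : a + c ≠ a + b + c := by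
    rw [show a + b + c = a + c + b by abel]; exact fun h => hb0 (left_eq_add.mp h)
  have e7 : a + b ≠ a + c := fun h => hbc (add_left_cancel h)
  have hc' : c ≠ a + b := Ne.symm h1
  have hb' : b ≠ a + c := Ne.symm h2
  rw [show (6 : ℕ) = ({a, b, c, a + b, a + c, a+b+c} : Finset G).card from ?_]
  · rw [card_insert_of_notMem (by simp [hab, hac, e1, e1', e3]),
        card_insert_of_notMem (by simp [hbc, e2, hb', e4]),
        card_insert_of_notMem (by simp [hc', e2', e5]),
        card_insert_of_notMem (by simp [e7, e6]),
        card_insert_of_notMem (by simp [e6']), card_singleton]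

end Aux

theorem stmt2 {G : Type*} [AddCommGroup G] [DecidableEq G] (S : Finset G)
    (hS : ZeroSumFree S) (hcard : S.card = 3) :
    5 ≤ (sigmaSet S).card ∧
      ((∀ g ∈ S, ¬(g ≠ 0 ∧ g + g = 0)) → 6 ≤ (sigmaSet S).card) := by
  obtain ⟨a, b, c, hab, hac, hbc, rfl⟩ := Finset.card_eq_three.mp hcard
  obtain ⟨ha0, hb0, hc0, hab0, hac0, hbc0, habc0⟩ := zsf_facts hab hac hbc hS
  -- permuted versions of the set
  have hsacb : ({a,c,b} : Finset G) = {a,b,c} := by ext x; simp; tauto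
  have hsbca : ({b,c,a} : Finset G) = {a,b,c} := by ext x; simp; tauto
  have hscab : ({c,a,b} : Finset G) = {a,b,c} := by ext x; simp; tauto
  have hsbac : ({b,a,c} : Finset G) = {a,b,c} := by ext x; simp; tauto
  have hnot3 : ¬(a + b = c ∧ a + c = b ∧ b + c = a) := by
    rintro ⟨p1, p2, p3⟩
    apply habc0
    have : (a+b) + (a+c) + (b+c) = c + b + a := by rw [p1, p2, p3]
    have h2 : a + b + c + (a + b + c) = a + b + c := by
      rw [show a+b+c+(a+b+c) = (a+b)+(a+c)+(b+c) by abel, this]; abel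
    exact add_eq_right.mp h2
  constructor
  · by_cases p1 : a + b = c
    · by_cases p2 : a + c = b
      · -- then ¬ p3
        have p3 : b + c ≠ a := fun h => hnot3 ⟨p1, p2, h⟩
        have := aux5 (a := b) (b := c) (c := a) hbc (Ne.symm hab) (Ne.symm hac)
          (by rwa [hsbca]) p3
        rwa [hsbca] at this
      · have := aux5 (a := a) (b := c) (c := b) hac hab (Ne.symm hbc)
          (by rwa [hsacb]) p2
        rwa [hsacb] at this
    · exact aux5 hab hac hbc hS p1
  · intro hord
    have hano2 : ¬(a + a = 0) := fun h => hord a (by simp) ⟨ha0, h⟩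
    have hbno2 : ¬(b + b = 0) := fun h => hord b (by simp) ⟨hb0, h⟩
    have hcno2 : ¬(c + c = 0) := fun h => hord c (by simp) ⟨hc0, h⟩
    -- at most one of p1, p2, p3 holds
    by_cases p1 : a + b = c
    · -- p1 holds: then ¬p2 and ¬p3; use aux6 with (c, a, b): need c+a ≠ b and c+b ≠ a
      have np2 : c + a ≠ b := by
        intro h
        apply hano2
        -- a+b = c, c+a = b ⇒ a+a = 0
        have h' : a + (a + b) = b := by rw [p1, add_comm]; exact h
        have h2 : (a + a) + b = b := by rw [add_assoc]; exact h'
        exact add_eq_right.mp h2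
      have np3 : c + b ≠ a := by
        intro h
        apply hbno2
        have h' : b + (a + b) = a := by rw [p1]; rwa [add_comm c b] at h
        have h2 : (b + b) + a = a := by rw [show b + b + a = b + (a + b) from by abel]; exact h'
        exact add_eq_right.mp h2
      have := aux6 (a := c) (b := a) (c := b) (Ne.symm hac) (Ne.symm hbc) hab
        (by rwa [hscab]) np2 np3
      rwa [hscab] at this
    · by_cases p2 : a + c = b
      · -- p2 holds, ¬p1; need ¬p3; use aux6 with (b, a, c): need b+a ≠ c and b+c ≠ a
        have np3 : b + c ≠ a := by
          intro h
          apply hcno2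
          have h' : c + (a + c) = a := by rw [p2]; rwa [add_comm b c] at h
          have h2 : (c + c) + a = a := by rw [show c + c + a = c + (a + c) from by abel]; exact h'
          exact add_eq_right.mp h2
        have := aux6 (a := b) (b := a) (c := c) (Ne.symm hab) hbc hac
          (by rwa [hsbac]) (fun h => p1 (by rwa [add_comm] at h)) np3
        rwa [hsbac] at this
      · exact aux6 hab hac hbc hS p1 p2
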